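/- Let A be a finite alphabet with a total order <, let z ∈ A, and let w, w' be finite words with w' nonempty such that w = ψ_z(w') and w does not end with the letter z. Then: if min(w) begins with z, min(w) = ψ_z(min(w')); otherwise, min(w) = z^{-1}ψ_z(min(w')), i.e., min(w) is obtained from ψ_z(min(w')) by deleting its first letter z. -/

import Mathlib

/-- The prefix of length `k` of an infinite word `t`. -/
def prefixList {A : Type*} (t : ℕ → A) (k : ℕ) : List A := (List.range k).map t

/-- `u` occurs as a factor of the infinite word `t` at position `i`. -/
def FactorAt {A : Type*} (t : ℕ → A) (u : List A) (i : ℕ) : Prop :=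
  u = (List.range u.length).map (fun j => t (i + j))

/-- `u` is a (finite) factor of the infinite word `t`. -/
def IsFactorInf {A : Type*} (t : ℕ → A) (u : List A) : Prop := ∃ i, FactorAt t u i

/-- An infinite word is recurrent if each of its factors occurs infinitely often. -/
def Recurrent {A : Type*} (t : ℕ → A) : Prop :=
  ∀ u, IsFactorInf t u → ∀ N, ∃ i, N ≤ i ∧ FactorAt t u i

/-- `u` is a right special factor of `t`. -/
def RightSpecial {A : Type*} (t : ℕ → A) (u : List A) : Prop :=
  ∃ a b : A, a ≠ b ∧ IsFactorInf t (u ++ [a]) ∧ IsFactorInf t (u ++ [b])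

/-- `u` is a left special factor of `t`. -/
def LeftSpecial {A : Type*} (t : ℕ → A) (u : List A) : Prop :=
  ∃ a b : A, a ≠ b ∧ IsFactorInf t (a :: u) ∧ IsFactorInf t (b :: u)

/-- An infinite word is episturmian if its set of factors is closed under reversal
and it has at most one right special factor of each length. -/
def Episturmian {A : Type*} (t : ℕ → A) : Prop :=
  (∀ u, IsFactorInf t u → IsFactorInf t u.reverse) ∧
  (∀ u v, RightSpecial t u → RightSpecial t v → u.length = v.length → u = v)

/-- A standard episturmian word: episturmian with all left special factors prefixes. -/
def StdEpisturmian {A : Type*} (t : ℕ → A) : Prop :=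
  Episturmian t ∧ ∀ u, LeftSpecial t u → u = prefixList t u.length

/-- A finite word is finite episturmian if it is a factor of some episturmian infinite word. -/
def FiniteEpisturmian {A : Type*} (w : List A) : Prop :=
  ∃ t : ℕ → A, Episturmian t ∧ IsFactorInf t w

/-- An acceptable pair: a strict total order `r` on `A` together with a letter `a`
that is minimal for `r`. -/
def AcceptablePair {A : Type*} (r : A → A → Prop) (a : A) : Prop :=
  IsStrictTotalOrder A r ∧ ∀ b, b ≠ a → r a b

/-- Non-strict lexicographic order on finite words induced by the order `r` on letters. -/
def listLe {A : Type*} (r : A → A → Prop) (u v : List A) : Prop := u = v ∨ List.Lex r u v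

/-- Non-strict lexicographic order on infinite words induced by the order `r` on letters. -/
def infLe {A : Type*} (r : A → A → Prop) (x y : ℕ → A) : Prop :=
  x = y ∨ ∃ i, (∀ j, j < i → x j = y j) ∧ r (x i) (y i)

/-- `m` is the lexicographically smallest factor of the finite word `w` of length `k`. -/
def IsMinFacLen {A : Type*} (r : A → A → Prop) (w : List A) (k : ℕ) (m : List A) : Prop :=
  m <:+: w ∧ m.length = k ∧ ∀ u, u <:+: w → u.length = k → listLe r m u

/-- `m` is the lexicographically greatest factor of the finite word `w` of length `k`. -/
def IsMaxFacLen {A : Type*} (r : A → A → Prop) (w : List A) (k : ℕ) (m : List A) : Prop :=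
  m <:+: w ∧ m.length = k ∧ ∀ u, u <:+: w → u.length = k → listLe r u m

/-- `m = min(w)`: for each `j ≤ |m|` the prefix of `m` of length `j` is `min(w|j)`,
and `|m|` is maximal with this chain property. -/
def IsMinFin {A : Type*} (r : A → A → Prop) (w m : List A) : Prop :=
  m ≠ [] ∧
  (∀ j, j ≤ m.length → IsMinFacLen r w j (m.take j)) ∧
  (∀ m', IsMinFacLen r w (m.length + 1) m' → ¬ m <+: m')

/-- `m = max(w)` (finite word version). -/
def IsMaxFin {A : Type*} (r : A → A → Prop) (w m : List A) : Prop :=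
  m ≠ [] ∧
  (∀ j, j ≤ m.length → IsMaxFacLen r w j (m.take j)) ∧
  (∀ m', IsMaxFacLen r w (m.length + 1) m' → ¬ m <+: m')

/-- `m = min(t)` for an infinite word `t`: each prefix of `m` is the lexicographically
smallest factor of `t` of its length. -/
def IsMinInf {A : Type*} (r : A → A → Prop) (t m : ℕ → A) : Prop :=
  ∀ k, IsFactorInf t (prefixList m k) ∧
    ∀ u, IsFactorInf t u → u.length = k → listLe r (prefixList m k) u

/-- `m = max(t)` for an infinite word `t`. -/
def IsMaxInf {A : Type*} (r : A → A → Prop) (t m : ℕ → A) : Prop :=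
  ∀ k, IsFactorInf t (prefixList m k) ∧
    ∀ u, IsFactorInf t u → u.length = k → listLe r u (prefixList m k)

/-- Prepend a letter to an infinite word. -/
def consInf {A : Type*} (a : A) (t : ℕ → A) : ℕ → A
  | 0 => a
  | n + 1 => t n

/-- Prepend a finite word to an infinite word. -/
def wordAppend {A : Type*} (v : List A) (t : ℕ → A) : ℕ → A :=
  fun n => if h : n < v.length then v.get ⟨n, h⟩ else t (n - v.length)

/-- The pure epistandard morphism `ψ_z` on finite words: it fixes `z` and sends
each letter `x ≠ z` to `zx`. -/
def psiW {A : Type*} [DecidableEq A] (z : A) (w : List A) : List A :=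
  (w.map (fun x => if x = z then [z] else [z, x])).flatten

/-- The finite word `u` is a prefix of the infinite word `t`. -/
def IsPrefixInf {A : Type*} (u : List A) (t : ℕ → A) : Prop := u = prefixList t u.length

/-- `y = f(t)`: the infinite word `y` is the image of the infinite word `t` under the
(non-erasing) morphism `f`, acting letter by letter. -/
def IsMorphImage {A : Type*} (f : List A → List A) (t y : ℕ → A) : Prop :=
  ∀ k, IsPrefixInf (f (prefixList t k)) y

/-- Pure epistandard morphisms: finite compositions of the morphisms `ψ_a`. -/
inductive PureEpistandard {A : Type*} [DecidableEq A] : (List A → List A) → Prop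
  | id : PureEpistandard _root_.id
  | comp (a : A) (f : List A → List A) : PureEpistandard f →
      PureEpistandard (fun w => psiW a (f w))

/-- An infinite word is episkew if it is non-recurrent and all of its factors
are finite episturmian. -/
def Episkew {A : Type*} (t : ℕ → A) : Prop :=
  ¬ Recurrent t ∧ ∀ u, IsFactorInf t u → FiniteEpisturmian u

/- Two-letter (Bool) notions: `false` plays the role of `a`, `true` of `b`,
with the order `false < true`. -/

/-- A finite binary word is balanced. -/
def BalancedList (w : List Bool) : Prop :=
  ∀ u v : List Bool, u <:+: w → v <:+: w → u.length = v.length →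
    |(u.count true : ℤ) - (v.count true : ℤ)| ≤ 1

/-- An infinite binary word is balanced. -/
def BalancedInf (t : ℕ → Bool) : Prop :=
  ∀ u v : List Bool, IsFactorInf t u → IsFactorInf t v → u.length = v.length →
    |(u.count true : ℤ) - (v.count true : ℤ)| ≤ 1

/-- The Sturmian word of slope `α` and intercept `ρ` defined via floors. -/
def SturmianFloor (α ρ : ℝ) (t : ℕ → Bool) : Prop :=
  ∀ n : ℕ, t n = true ↔ ⌊((n : ℝ) + 1) * α + ρ⌋ ≠ ⌊(n : ℝ) * α + ρ⌋

/-- The Sturmian word of slope `α` and intercept `ρ` defined via ceilings. -/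
def SturmianCeil (α ρ : ℝ) (t : ℕ → Bool) : Prop :=
  ∀ n : ℕ, t n = true ↔ ⌈((n : ℝ) + 1) * α + ρ⌉ ≠ ⌈(n : ℝ) * α + ρ⌉

/-- Aperiodic Sturmian words: those of irrational slope. -/
def IsAperiodicSturmian (t : ℕ → Bool) : Prop :=
  ∃ α ρ : ℝ, α ∈ Set.Icc (0 : ℝ) 1 ∧ ρ ∈ Set.Icc (0 : ℝ) 1 ∧ Irrational α ∧
    (SturmianFloor α ρ t ∨ SturmianCeil α ρ t)

/-- Standard Sturmian words: those with `ρ = α`. -/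
def IsStandardSturmian (t : ℕ → Bool) : Prop :=
  ∃ α : ℝ, α ∈ Set.Icc (0 : ℝ) 1 ∧ (SturmianFloor α α t ∨ SturmianCeil α α t)

/-- A fine infinite binary word: `(min(t), max(t)) = (a·s, b·s)` for some infinite word `s`. -/
def FineBool (t : ℕ → Bool) : Prop :=
  ∃ s : ℕ → Bool, IsMinInf (· < ·) t (consInf false s) ∧ IsMaxInf (· < ·) t (consInf true s)

/-- A periodic infinite word. -/
def PeriodicInf {A : Type*} (t : ℕ → A) : Prop := ∃ p, 0 < p ∧ ∀ i, t (i + p) = t i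

/-- An ultimately periodic infinite word. -/
def UltPeriodicInf {A : Type*} (t : ℕ → A) : Prop :=
  ∃ p, 0 < p ∧ ∃ m, ∀ i, m ≤ i → t (i + p) = t i

set_option linter.unusedSectionVars false
set_option linter.unusedVariables false

section Aux
variable {A : Type*} [DecidableEq A] {r : A → A → Prop} {z : A}

theorem psiW_nil : psiW z ([] : List A) = [] := rfl

theorem psiW_cons (a : A) (s : List A) :
    psiW z (a :: s) = z :: (if a = z then psiW z s else a :: psiW z s) := by
  simp only [psiW, List.map_cons, List.flatten_cons]
  split <;> simp

theorem psiW_append (s t : List A) : psiW z (s ++ t) = psiW z s ++ psiW z t := by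
  simp [psiW]

theorem psiW_ne_nil {s : List A} (h : s ≠ []) : psiW z s ≠ [] := by
  cases s with
  | nil => exact absurd rfl h
  | cons a s => rw [psiW_cons]; simp

theorem length_le_psiW (s : List A) : s.length ≤ (psiW z s).length := by
  induction s with
  | nil => simp [psiW]
  | cons a s ih => rw [psiW_cons]; split <;> simp <;> omega

theorem mem_psiW {x : A} {s : List A} (h : x ∈ psiW z s) : x = z ∨ x ∈ s := by
  induction s with
  | nil => simp [psiW] at h
  | cons a s ih =>
    rw [psiW_cons] at h
    rcases List.mem_cons.mp h with rfl | h
    · exact Or.inl rfl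
    · split at h
      · rcases ih h with h | h
        · exact Or.inl h
        · exact Or.inr (List.mem_cons_of_mem _ h)
      · rcases List.mem_cons.mp h with rfl | h
        · exact Or.inr (List.mem_cons_self)
        · rcases ih h with h | h
          · exact Or.inl h
          · exact Or.inr (List.mem_cons_of_mem _ h)

theorem infix_psiW {u v : List A} (h : u <:+: v) : psiW z u <:+: psiW z v := by
  obtain ⟨s, t, rfl⟩ := h
  exact ⟨psiW z s, psiW z t, by rw [← psiW_append, ← psiW_append]⟩

theorem listLe_refl (u : List A) : listLe r u u := Or.inl rfl

theorem lex_of_prefix_ne : ∀ {u v : List A}, u <+: v → u ≠ v → List.Lex r u v := by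
  intro u
  induction u with
  | nil => intro v _ hne; cases v with
    | nil => exact absurd rfl hne
    | cons b v => exact List.Lex.nil
  | cons a u ih =>
    intro v hp hne
    cases v with
    | nil => exact absurd (List.prefix_nil.mp hp) (by simp)
    | cons b v =>
      obtain ⟨rfl, hp'⟩ := List.cons_prefix_cons.mp hp
      exact List.Lex.cons (ih hp' (fun h => hne (by rw [h])))

theorem listLe_of_prefix {u v : List A} (h : u <+: v) : listLe r u v := by
  rcases eq_or_ne u v with rfl | hne
  · exact Or.inl rfl
  · exact Or.inr (lex_of_prefix_ne h hne)

theorem listLe_antisymm [IsAsymm A r] {u v : List A} (h1 : listLe r u v) (h2 : listLe r v u) :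
    u = v := by
  rcases h1 with rfl | h1
  · rfl
  rcases h2 with rfl | h2
  · rfl
  exact absurd h2 (asymm_of (List.Lex r) h1)

theorem lex_trans [IsTrans A r] : ∀ {u v w : List A}, List.Lex r u v → List.Lex r v w →
    List.Lex r u w := by
  intro u v w h1
  induction h1 generalizing w with
  | nil => intro h2; cases h2 <;> exact List.Lex.nil
  | @cons a l1 l2 h ih =>
    intro h2
    cases h2 with
    | cons h2' => exact List.Lex.cons (ih h2')
    | rel hr2 => exact List.Lex.rel hr2
  | @rel a b l1 l2 hab =>
    intro h2
    cases h2 with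
    | cons h2' => exact List.Lex.rel hab
    | rel hbc => exact List.Lex.rel (Trans.trans hab hbc)

theorem listLe_trans [IsTrans A r] {u v w : List A} (h1 : listLe r u v) (h2 : listLe r v w) :
    listLe r u w := by
  rcases h1 with rfl | h1
  · exact h2
  rcases h2 with rfl | h2
  · exact Or.inr h1
  · exact Or.inr (lex_trans h1 h2)

theorem listLe_total [IsTrichotomous A r] : ∀ u v : List A, listLe r u v ∨ listLe r v u := by
  intro u
  induction u with
  | nil => intro v; cases v with
    | nil => exact Or.inl (Or.inl rfl)
    | cons b v => exact Or.inl (Or.inr List.Lex.nil)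
  | cons a u ih =>
    intro v
    cases v with
    | nil => exact Or.inr (Or.inr List.Lex.nil)
    | cons b v =>
      rcases trichotomous_of r a b with h | rfl | h
      · exact Or.inl (Or.inr (List.Lex.rel h))
      · rcases ih v with h | h
        · rcases h with rfl | h
          · exact Or.inl (Or.inl rfl)
          · exact Or.inl (Or.inr (List.Lex.cons h))
        · rcases h with rfl | h
          · exact Or.inl (Or.inl rfl)
          · exact Or.inr (Or.inr (List.Lex.cons h))
      · exact Or.inr (Or.inr (List.Lex.rel h))

theorem listLe_take {u v : List A} (h : listLe r u v) (j : ℕ) :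
    listLe r (u.take j) (v.take j) := by
  rcases h with rfl | h
  · exact Or.inl rfl
  induction h generalizing j with
  | nil => exact listLe_of_prefix (by simp)
  | @cons a l1 l2 h ih =>
    cases j with
    | zero => exact Or.inl rfl
    | succ j =>
      rcases ih j with h' | h'
      · exact Or.inl (by simp [h'])
      · exact Or.inr (List.Lex.cons h')
  | @rel a b l1 l2 hab =>
    cases j with
    | zero => exact Or.inl rfl
    | succ j => exact Or.inr (List.Lex.rel hab)

theorem listLe_cons_cons [IsIrrefl A r] {a : A} {u v : List A}
    (h : listLe r (a :: u) (a :: v)) : listLe r u v := by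
  rcases h with h | h
  · exact Or.inl (by injection h)
  · cases h with
    | cons h' => exact Or.inr h'
    | rel hr' => exact absurd hr' (irrefl_of r a)

theorem listLe_diff {a b : A} (hab : r a b) (p u v : List A) (j : ℕ) :
    listLe r ((p ++ a :: u).take j) ((p ++ b :: v).take j) := by
  induction p generalizing j with
  | nil =>
    cases j with
    | zero => exact Or.inl rfl
    | succ j => exact Or.inr (List.Lex.rel hab)
  | cons c p ih =>
    cases j with
    | zero => exact Or.inl rfl
    | succ j =>
      rcases ih j with h | h
      · exact Or.inl (by simp only [List.cons_append, List.take_succ_cons, h])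
      · exact Or.inr (List.Lex.cons h)

theorem lex_decomp {u v : List A} (h : List.Lex r u v) :
    u <+: v ∨ ∃ p a b u1 v1, u = p ++ a :: u1 ∧ v = p ++ b :: v1 ∧ r a b := by
  induction h with
  | nil => exact Or.inl (List.nil_prefix)
  | @cons a l1 l2 h ih =>
    rcases ih with h' | ⟨p, x, y, u1, v1, h1, h2, hxy⟩
    · exact Or.inl (List.cons_prefix_cons.mpr ⟨rfl, h'⟩)
    · exact Or.inr ⟨a :: p, x, y, u1, v1, by simp [h1], by simp [h2], hxy⟩
  | @rel a l1 b l2 hab => exact Or.inr ⟨[], a, b, l1, l2, rfl, rfl, hab⟩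

end Aux

section Aux2
variable {A : Type*} [DecidableEq A] {r : A → A → Prop} {z : A}

theorem take_eq_of_prefix {u v : List A} (h : u <+: v) {j : ℕ} (hj : j ≤ u.length) :
    u.take j = v.take j := by
  obtain ⟨t, rfl⟩ := h
  rw [List.take_append_of_le_length hj]

/-- Key comparison lemma: ψ is "monotone" on truncations. -/
theorem psi_take_le [IsIrrefl A r] {s v : List A}
    (hle : listLe r (s.take (min s.length v.length)) (v.take (min s.length v.length)))
    {j : ℕ} (hjs : j ≤ (psiW z s).length) (hjv : j ≤ (psiW z v).length) :
    listLe r ((psiW z s).take j) ((psiW z v).take j) := by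
  set l := min s.length v.length with hl
  have heqcase : s.take l = v.take l → listLe r ((psiW z s).take j) ((psiW z v).take j) := by
    intro heq
    rcases le_total s.length v.length with h | h
    · have hs : s <+: v := by
        have h1 : s.take l = s := by rw [hl, min_eq_left h, List.take_length]
        rw [h1] at heq; rw [heq]; exact List.take_prefix _ _
      obtain ⟨t, rfl⟩ := hs
      rw [psiW_append, List.take_append_of_le_length hjs]
      exact Or.inl rfl
    · have hs : v <+: s := by
        have h1 : v.take l = v := by rw [hl, min_eq_right h, List.take_length]
        rw [h1] at heq; rw [← heq]; exact List.take_prefix _ _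
      obtain ⟨t, rfl⟩ := hs
      rw [psiW_append, List.take_append_of_le_length hjv]
      exact Or.inl rfl
  rcases hle with heq | hlex
  · exact heqcase heq
  rcases lex_decomp hlex with hp | ⟨p, a, b, u1, v1, h1, h2, hab⟩
  · refine heqcase (hp.eq_of_length ?_)
    rw [List.length_take, List.length_take, hl]
    omega
  · have hS : ∃ s1, s = p ++ a :: s1 := by
      refine ⟨u1 ++ s.drop l, ?_⟩
      conv_lhs => rw [← List.take_append_drop l s]
      rw [h1]; simp
    obtain ⟨s1, hS⟩ := hS
    have hV : ∃ t1, v = p ++ b :: t1 := by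
      refine ⟨v1 ++ v.drop l, ?_⟩
      conv_lhs => rw [← List.take_append_drop l v]
      rw [h2]; simp
    obtain ⟨t1, hV⟩ := hV
    by_cases ha : a = z <;> by_cases hb : b = z
    · exact absurd hab (by rw [ha, hb]; exact irrefl_of r z)
    · -- a = z, b ≠ z
      cases s1 with
      | nil =>
        have hps : psiW z s = psiW z p ++ [z] := by
          rw [hS, psiW_append, psiW_cons, if_pos ha, psiW_nil]
        have hpv : psiW z v = psiW z s ++ (b :: psiW z t1) := by
          rw [hV, psiW_append, psiW_cons, if_neg hb, hps]
          simp
        rw [hpv, List.take_append_of_le_length hjs]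
        exact Or.inl rfl
      | cons a1 s2 =>
        have hps : psiW z s = (psiW z p ++ [z]) ++ z :: (if a1 = z then psiW z s2
            else a1 :: psiW z s2) := by
          rw [hS, psiW_append, psiW_cons, if_pos ha, psiW_cons]
          simp
        have hpv : psiW z v = (psiW z p ++ [z]) ++ b :: psiW z t1 := by
          rw [hV, psiW_append, psiW_cons, if_neg hb]
          simp
        rw [hps, hpv]
        exact listLe_diff (ha ▸ hab) _ _ _ j
    · -- a ≠ z, b = z
      cases t1 with
      | nil =>
        have hpv : psiW z v = psiW z p ++ [z] := by
          rw [hV, psiW_append, psiW_cons, if_pos hb, psiW_nil]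
        have hps : psiW z s = psiW z v ++ (a :: psiW z s1) := by
          rw [hS, psiW_append, psiW_cons, if_neg ha, hpv]
          simp
        rw [hps, List.take_append_of_le_length hjv]
        exact Or.inl rfl
      | cons b1 t2 =>
        have hps : psiW z s = (psiW z p ++ [z]) ++ a :: psiW z s1 := by
          rw [hS, psiW_append, psiW_cons, if_neg ha]
          simp
        have hpv : psiW z v = (psiW z p ++ [z]) ++ z :: (if b1 = z then psiW z t2
            else b1 :: psiW z t2) := by
          rw [hV, psiW_append, psiW_cons, if_pos hb, psiW_cons]
          simp
        rw [hps, hpv]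
        exact listLe_diff (hb ▸ hab) _ _ _ j
    · have hps : psiW z s = (psiW z p ++ [z]) ++ a :: psiW z s1 := by
        rw [hS, psiW_append, psiW_cons, if_neg ha]
        simp
      have hpv : psiW z v = (psiW z p ++ [z]) ++ b :: psiW z t1 := by
        rw [hV, psiW_append, psiW_cons, if_neg hb]
        simp
      rw [hps, hpv]
      exact listLe_diff hab _ _ _ j

/-- Every factor of `ψ(w')` beginning with `z` is a prefix of `ψ(t)` for some factor `t`. -/
theorem occ_psiW (w' : List A) : ∀ u : List A, u <:+: psiW z w' → u.head? = some z →
    ∃ t, t <:+: w' ∧ u <+: psiW z t := by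
  induction w' with
  | nil =>
    intro u hu hh
    rw [psiW_nil] at hu
    have := List.eq_nil_of_infix_nil hu
    subst this; simp at hh
  | cons c rest ih =>
    intro u hu hh
    rw [psiW_cons] at hu
    by_cases hc : c = z
    · rw [if_pos hc] at hu
      rcases List.infix_cons_iff.mp hu with hp | hi
      · exact ⟨c :: rest, List.infix_refl _, by rw [psiW_cons, if_pos hc]; exact hp⟩
      · obtain ⟨t, ht, hpt⟩ := ih u hi hh
        exact ⟨t, List.infix_cons ht, hpt⟩
    · rw [if_neg hc] at hu
      rcases List.infix_cons_iff.mp hu with hp | hi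
      · exact ⟨c :: rest, List.infix_refl _, by rw [psiW_cons, if_neg hc]; exact hp⟩
      · rcases List.infix_cons_iff.mp hi with hp | hi2
        · exfalso
          cases u with
          | nil => simp at hh
          | cons x u' =>
            have hx : x = z := by simpa using hh
            obtain ⟨hxc, -⟩ := List.cons_prefix_cons.mp hp
            exact hc (hxc.symm.trans hx)
        · obtain ⟨t, ht, hpt⟩ := ih u hi2 hh
          exact ⟨t, List.infix_cons ht, hpt⟩

/-- Every factor of `ψ(w')` beginning with a letter `≠ z` is preceded by `z`. -/
theorem prec_psiW (w' : List A) : ∀ (u : List A) (x : A), u <:+: psiW z w' →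
    u.head? = some x → x ≠ z → z :: u <:+: psiW z w' := by
  induction w' with
  | nil =>
    intro u x hu hh _
    rw [psiW_nil] at hu
    have := List.eq_nil_of_infix_nil hu
    subst this; simp at hh
  | cons c rest ih =>
    intro u x hu hh hxz
    rw [psiW_cons] at hu ⊢
    by_cases hc : c = z
    · rw [if_pos hc] at hu ⊢
      rcases List.infix_cons_iff.mp hu with hp | hi
      · exfalso
        cases u with
        | nil => simp at hh
        | cons y u' =>
          have hy : y = x := by simpa using hh
          obtain ⟨hyz, -⟩ := List.cons_prefix_cons.mp hp
          exact hxz (hy.symm.trans hyz)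
      · exact List.infix_cons (ih u x hi hh hxz)
    · rw [if_neg hc] at hu ⊢
      rcases List.infix_cons_iff.mp hu with hp | hi
      · exfalso
        cases u with
        | nil => simp at hh
        | cons y u' =>
          have hy : y = x := by simpa using hh
          obtain ⟨hyz, -⟩ := List.cons_prefix_cons.mp hp
          exact hxz (hy.symm.trans hyz)
      · rcases List.infix_cons_iff.mp hi with hp | hi2
        · exact (List.cons_prefix_cons.mpr ⟨rfl, hp⟩).isInfix
        · exact List.infix_cons (List.infix_cons (ih u x hi2 hh hxz))

/-- Desubstitution for one-letter extensions of `ψ` images. -/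
theorem desub_psiW (x : A) : ∀ (t s : List A), psiW z s ++ [x] <+: psiW z t →
    (∃ y, s ++ [y] <+: t) ∨ (x ≠ z ∧ ∃ s0, s = s0 ++ [z] ∧ s0 ++ [x] <+: t) := by
  intro t
  induction t with
  | nil =>
    intro s h
    rw [psiW_nil] at h
    have := List.prefix_nil.mp h
    simp at this
  | cons b t' ih =>
    intro s h
    cases s with
    | nil =>
      refine Or.inl ⟨b, ?_⟩
      rw [List.nil_append]
      exact List.cons_prefix_cons.mpr ⟨rfl, List.nil_prefix⟩
    | cons a s' =>
      rw [psiW_cons, psiW_cons, List.cons_append] at h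
      obtain ⟨-, h⟩ := List.cons_prefix_cons.mp h
      by_cases ha : a = z
      · by_cases hb : b = z
        · rw [if_pos ha, if_pos hb] at h
          rcases ih s' h with ⟨y, hy⟩ | ⟨hx, s0, hs0, hp⟩
          · exact Or.inl ⟨y, by
              rw [List.cons_append]
              exact List.cons_prefix_cons.mpr ⟨ha.trans hb.symm, hy⟩⟩
          · exact Or.inr ⟨hx, a :: s0, by rw [List.cons_append, hs0], by
              rw [List.cons_append]
              exact List.cons_prefix_cons.mpr ⟨ha.trans hb.symm, hp⟩⟩
        · rw [if_pos ha, if_neg hb] at h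
          cases s' with
          | nil =>
            rw [psiW_nil, List.nil_append] at h
            obtain ⟨hxb, -⟩ := List.cons_prefix_cons.mp h
            refine Or.inr ⟨by rw [hxb]; exact hb, [], by rw [List.nil_append, ha], ?_⟩
            rw [List.nil_append, hxb]
            exact List.cons_prefix_cons.mpr ⟨rfl, List.nil_prefix⟩
          | cons a1 s2 =>
            rw [psiW_cons, List.cons_append] at h
            obtain ⟨hzb, -⟩ := List.cons_prefix_cons.mp h
            exact absurd hzb.symm hb
      · by_cases hb : b = z
        · rw [if_neg ha, if_pos hb, List.cons_append] at h
          exfalso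
          cases t' with
          | nil =>
            rw [psiW_nil] at h
            simpa using List.prefix_nil.mp h
          | cons b1 t2 =>
            rw [psiW_cons] at h
            obtain ⟨haz, -⟩ := List.cons_prefix_cons.mp h
            exact ha haz
        · rw [if_neg ha, if_neg hb, List.cons_append] at h
          obtain ⟨hab2, h⟩ := List.cons_prefix_cons.mp h
          rcases ih s' h with ⟨y, hy⟩ | ⟨hx, s0, hs0, hp⟩
          · exact Or.inl ⟨y, by
              rw [List.cons_append]
              exact List.cons_prefix_cons.mpr ⟨hab2, hy⟩⟩
          · exact Or.inr ⟨hx, a :: s0, by rw [List.cons_append, hs0], by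
              rw [List.cons_append]
              exact List.cons_prefix_cons.mpr ⟨hab2, hp⟩⟩

end Aux2

section Aux3
variable {A : Type*} [DecidableEq A] {r : A → A → Prop} {z : A}

theorem exists_listLe_min [IsTrichotomous A r] [IsTrans A r] :
    ∀ L : List (List A), L ≠ [] → ∃ m ∈ L, ∀ u ∈ L, listLe r m u := by
  intro L
  induction L with
  | nil => simp
  | cons u L ih =>
    intro _
    rcases eq_or_ne L [] with rfl | hL
    · refine ⟨u, List.mem_cons_self, ?_⟩
      intro v hv
      rw [List.mem_singleton] at hv
      rw [hv]
      exact listLe_refl u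
    · obtain ⟨m, hmem, hmin⟩ := ih hL
      rcases listLe_total (r := r) u m with h | h
      · refine ⟨u, List.mem_cons_self, ?_⟩
        intro v hv
        rcases List.mem_cons.mp hv with rfl | hv
        · exact listLe_refl v
        · exact listLe_trans h (hmin v hv)
      · refine ⟨m, List.mem_cons_of_mem _ hmem, ?_⟩
        intro v hv
        rcases List.mem_cons.mp hv with rfl | hv
        · exact h
        · exact hmin v hv

theorem exists_minFacLen [IsTrichotomous A r] [IsTrans A r] (w : List A) (k : ℕ)
    (hne : ∃ u, u <:+: w ∧ u.length = k) : ∃ m, IsMinFacLen r w k m := by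
  classical
  set L := (w.tails.map (fun t => t.take k)).filter (fun x => x.length = k) with hLdef
  have hmemL : ∀ u : List A, u ∈ L ↔ (u <:+: w ∧ u.length = k) := by
    intro u
    rw [hLdef, List.mem_filter, List.mem_map]
    constructor
    · rintro ⟨⟨t, ht, rfl⟩, hlen⟩
      have ht' : t <:+ w := (List.mem_tails _ _).mp ht
      exact ⟨(List.take_prefix _ _).isInfix.trans ht'.isInfix, by simpa using hlen⟩
    · rintro ⟨hinf, hlen⟩
      obtain ⟨t, hpre, hsuf⟩ := List.infix_iff_prefix_suffix.mp hinf
      refine ⟨⟨t, (List.mem_tails _ _).mpr hsuf, ?_⟩, by simpa using hlen⟩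
      rw [← hlen]
      exact (List.prefix_iff_eq_take.mp hpre).symm
  obtain ⟨u0, hu0⟩ := hne
  have hLne : L ≠ [] := List.ne_nil_of_mem ((hmemL u0).mpr hu0)
  obtain ⟨m, hmem, hmin⟩ := exists_listLe_min (r := r) L hLne
  obtain ⟨hm1, hm2⟩ := (hmemL m).mp hmem
  exact ⟨m, hm1, hm2, fun u hu hul => hmin u ((hmemL u).mpr ⟨hu, hul⟩)⟩

theorem minFacLen_unique [IsAsymm A r] {w : List A} {k : ℕ} {u1 u2 : List A}
    (h1 : IsMinFacLen r w k u1) (h2 : IsMinFacLen r w k u2) : u1 = u2 :=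
  listLe_antisymm (h1.2.2 u2 h2.1 h2.2.1) (h2.2.2 u1 h1.1 h1.2.1)

theorem isMinFin_unique [IsAsymm A r] [IsTrichotomous A r] {w m1 m2 : List A}
    (h1 : IsMinFin r w m1) (h2 : IsMinFin r w m2) : m1 = m2 := by
  have key : ∀ u v : List A, IsMinFin r w u → IsMinFin r w v → u.length ≤ v.length → u = v := by
    intro u v hu hv hle
    have he : u = v.take u.length := by
      have hu' : IsMinFacLen r w u.length u := by
        have := hu.2.1 u.length le_rfl
        rwa [List.take_length] at this
      exact minFacLen_unique hu' (hv.2.1 u.length hle)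
    rcases lt_or_eq_of_le hle with hlt | heq
    · exfalso
      have h5 : (v.take (u.length + 1)).take u.length <+: v.take (u.length + 1) :=
        List.take_prefix _ _
      rw [List.take_take, min_eq_left (by omega), ← he] at h5
      exact hu.2.2 _ (hv.2.1 _ (by omega)) h5
    · rw [he, heq, List.take_length]
  rcases le_total m1.length m2.length with h | h
  · exact key m1 m2 h1 h2 h
  · exact (key m2 m1 h2 h1 h).symm

/-- Maximality in `IsMinFin` implies no one-letter factor extension at all. -/
theorem no_ext [IsAsymm A r] [IsTrichotomous A r] [IsTrans A r] {w' m' : List A}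
    (hm' : IsMinFin r w' m') : ∀ y, ¬ (m' ++ [y] <:+: w') := by
  intro y hy
  obtain ⟨M1, hM1⟩ := exists_minFacLen (r := r) w' (m'.length + 1)
    ⟨m' ++ [y], hy, by simp⟩
  have hchain := hm'.2.1 m'.length le_rfl
  rw [List.take_length] at hchain
  have h1 : listLe r m' (M1.take m'.length) := by
    refine hchain.2.2 _ ((List.take_prefix _ _).isInfix.trans hM1.1) ?_
    rw [List.length_take, hM1.2.1]
    omega
  have h2 : listLe r (M1.take m'.length) m' := by
    have h3 := listLe_take (hM1.2.2 (m' ++ [y]) hy (by simp)) m'.length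
    rwa [List.take_left] at h3
  have h4 : M1.take m'.length = m' := listLe_antisymm h2 h1
  exact hm'.2.2 M1 hM1 (h4 ▸ List.take_prefix _ _)

/-- `min(w')` occurs only as a suffix when it cannot be extended. -/
theorem minFin_suffix [IsAsymm A r] [IsTrichotomous A r] [IsTrans A r] {w' m' : List A}
    (hm' : IsMinFin r w' m') (hinf : m' <:+: w') : ∃ pre, w' = pre ++ m' := by
  obtain ⟨s, t, hst⟩ := hinf
  cases t with
  | nil => exact ⟨s, by rw [← hst, List.append_nil]⟩
  | cons y t2 =>
    exfalso
    refine no_ext hm' y ⟨s, t2, ?_⟩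
    rw [← hst]
    simp

end Aux3


/-- If `w = ψ_z(w')` with `w'` nonempty and `w` does not end with `z`, then
`min(w) = ψ_z(min(w'))` if `min(w)` begins with `z`, and `min(w) = z⁻¹ψ_z(min(w'))`
otherwise. -/
theorem min_psi_not_ending {A : Type*} [Fintype A] [DecidableEq A]
    (r : A → A → Prop) (hr : IsStrictTotalOrder A r) (z : A) (w w' : List A)
    (hw' : w' ≠ []) (hw : w = psiW z w') (hlast : w.getLast? ≠ some z) :
    ∀ m m' : List A, IsMinFin r w m → IsMinFin r w' m' →
      (m.head? = some z → m = psiW z m') ∧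
      (m.head? ≠ some z → z :: m = psiW z m') := by
  haveI : IsStrictTotalOrder A r := hr
  intro m m0 hm hm0
  obtain ⟨c, m'', rfl⟩ : ∃ c t, m0 = c :: t := by
    cases m0 with
    | nil => exact absurd rfl hm0.1
    | cons c t => exact ⟨c, t, rfl⟩
  have chain' : ∀ l, l ≤ (c :: m'').length → ∀ v, v <:+: w' → v.length = l →
      listLe r ((c :: m'').take l) v := fun l hl v hv hvl =>
    (hm0.2.1 l hl).2.2 v hv hvl
  have hm'inf : (c :: m'') <:+: w' := by
    have h := (hm0.2.1 _ le_rfl).1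
    rwa [List.take_length] at h
  have hMinf : psiW z (c :: m'') <:+: w := by
    rw [hw]; exact infix_psiW hm'inf
  have hle : ∀ t : List A, t <:+: w' →
      listLe r ((c :: m'').take (min (c :: m'').length t.length))
        (t.take (min (c :: m'').length t.length)) := by
    intro t ht
    refine chain' _ (min_le_left _ _) _ ((List.take_prefix _ _).isInfix.trans ht) ?_
    rw [List.length_take]
    omega
  have noExt : ∀ x, ¬ (psiW z (c :: m'') ++ [x] <:+: w) := by
    intro x hx
    rw [hw] at hx
    have hhead : (psiW z (c :: m'') ++ [x]).head? = some z := by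
      rw [psiW_cons]; rfl
    obtain ⟨t, ht, hpt⟩ := occ_psiW w' _ hx hhead
    rcases desub_psiW x t (c :: m'') hpt with ⟨y, hy⟩ | ⟨hxz, s0, hs0, hp⟩
    · exact no_ext hm0 y (hy.isInfix.trans ht)
    · obtain ⟨pre, hpre⟩ := minFin_suffix hm0 hm'inf
      apply hlast
      rw [hw, hpre, hs0, psiW_append, psiW_append]
      have hz1 : psiW z [z] = [z] := by rw [psiW_cons, if_pos rfl, psiW_nil]
      rw [hz1, ← List.append_assoc, List.getLast?_concat]
  -- singleton comparison: the head of min(w') is below every other letter of w'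
  have hsing : ∀ x : A, x ∈ w' → x ≠ c → r c x := by
    intro x hxw' hxc
    have h1 : listLe r ((c :: m'').take 1) [x] := by
      refine chain' 1 (by simp) [x] ?_ rfl
      obtain ⟨s, t, hst⟩ := List.append_of_mem hxw'
      exact ⟨s, t, by rw [hst]; simp⟩
    simp only [List.take_succ_cons, List.take_zero] at h1
    rcases h1 with h1 | h1
    · exact absurd (by injection h1 with h1; exact h1.symm) hxc
    · exact (List.lex_singleton_iff _ _).mp h1
  by_cases hcz : r c z
  · -- CASE B : min(w) does not begin with z
    have hc : c ≠ z := fun h => (irrefl_of r z) (h ▸ hcz)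
    have hzM : psiW z (c :: m'') = z :: (c :: psiW z m'') := by
      rw [psiW_cons, if_neg hc]
    have hMF : IsMinFin r w (c :: psiW z m'') := by
      refine ⟨List.cons_ne_nil _ _, ?_, ?_⟩
      · intro j hj
        refine ⟨?_, ?_, ?_⟩
        · refine (List.take_prefix _ _).isInfix.trans ?_
          refine (List.suffix_cons z _).isInfix.trans ?_
          rw [← hzM]; exact hMinf
        · rw [List.length_take]; omega
        · intro u hu hulen
          cases u with
          | nil =>
            obtain rfl : j = 0 := by simpa using hulen.symm
            exact Or.inl rfl
          | cons x u' =>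
            by_cases hxc : x = c
            · have hzu : z :: (x :: u') <:+: psiW z w' := by
                rw [hw] at hu
                exact prec_psiW w' _ x hu rfl (by rw [hxc]; exact hc)
              obtain ⟨t, ht, hpt⟩ := occ_psiW w' _ hzu rfl
              have hlen2 : (z :: x :: u').length = j + 1 := by
                simp only [List.length_cons] at hulen ⊢; omega
              have h0 := List.prefix_iff_eq_take.mp hpt
              rw [hlen2] at h0
              have hjs : j + 1 ≤ (psiW z (c :: m'')).length := by
                rw [hzM]
                simp only [List.length_cons] at hj ⊢
                omega
              have hjv : j + 1 ≤ (psiW z t).length := by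
                have h2 := hpt.length_le
                rwa [hlen2] at h2
              have hcmp := psi_take_le (z := z) (r := r) (hle t ht) hjs hjv
              rw [hzM, List.take_succ_cons, ← h0] at hcmp
              exact listLe_cons_cons hcmp
            · have hxw : x ∈ w := hu.subset (List.mem_cons_self)
              have hrcx : r c x := by
                rcases mem_psiW (z := z) (by rw [← hw]; exact hxw) with h | hxw'
                · rw [h]; exact hcz
                · exact hsing x hxw' hxc
              obtain ⟨j', rfl⟩ : ∃ j', j = j' + 1 :=
                ⟨u'.length, by simpa using hulen.symm⟩
              rw [List.take_succ_cons]
              exact Or.inr (List.Lex.rel hrcx)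
      · intro M1 hM1 hpre
        obtain ⟨t1, rfl⟩ := hpre
        have ht1 : t1.length = 1 := by
          have h2 := hM1.2.1
          simp only [List.length_append, List.length_cons] at h2 ⊢
          omega
        obtain ⟨x, rfl⟩ := List.length_eq_one_iff.mp ht1
        refine noExt x ?_
        have hinfw : (c :: psiW z m'') ++ [x] <:+: psiW z w' := by
          rw [← hw]; exact hM1.1
        have h3 := prec_psiW w' _ c hinfw (by simp) hc
        rw [hw, hzM, List.cons_append]
        exact h3
    have hmM : m = c :: psiW z m'' := isMinFin_unique hm hMF
    constructor
    · intro hh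
      rw [hmM] at hh
      simp only [List.head?_cons, Option.some.injEq] at hh
      exact absurd hh hc
    · intro _
      rw [hmM, hzM]
  · -- CASE A : min(w) begins with z
    have hA : c = z ∨ r z c := by
      rcases trichotomous_of r c z with h | h | h
      · exact absurd h hcz
      · exact Or.inl h
      · exact Or.inr h
    have hMF : IsMinFin r w (psiW z (c :: m'')) := by
      refine ⟨psiW_ne_nil (List.cons_ne_nil _ _), ?_, ?_⟩
      · intro j hj
        refine ⟨(List.take_prefix _ _).isInfix.trans hMinf, ?_, ?_⟩
        · rw [List.length_take]; omega
        · intro u hu hulen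
          cases u with
          | nil =>
            obtain rfl : j = 0 := by simpa using hulen.symm
            exact Or.inl rfl
          | cons x u' =>
            by_cases hx : x = z
            · rw [hw] at hu
              obtain ⟨t, ht, hpt⟩ := occ_psiW w' _ hu (by simp [hx])
              have h0 := List.prefix_iff_eq_take.mp hpt
              rw [hulen] at h0
              have hjv : j ≤ (psiW z t).length := by
                have h2 := hpt.length_le
                rwa [hulen] at h2
              have hcmp := psi_take_le (z := z) (r := r) (hle t ht) hj hjv
              rwa [← h0] at hcmp
            · have hxw : x ∈ w := hu.subset (List.mem_cons_self)
              have hrzx : r z x := by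
                rcases mem_psiW (z := z) (by rw [← hw]; exact hxw) with h | hxw'
                · exact absurd h hx
                · by_cases hxc : x = c
                  · subst hxc
                    rcases hA with rfl | h
                    · exact absurd rfl hx
                    · exact h
                  · have hcx := hsing x hxw' hxc
                    rcases hA with rfl | h
                    · exact hcx
                    · exact trans_of r h hcx
              obtain ⟨j', rfl⟩ : ∃ j', j = j' + 1 :=
                ⟨u'.length, by simpa using hulen.symm⟩
              rw [psiW_cons, List.take_succ_cons]
              exact Or.inr (List.Lex.rel hrzx)
      · intro M1 hM1 hpre
        obtain ⟨t1, rfl⟩ := hpre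
        have ht1 : t1.length = 1 := by
          have h2 := hM1.2.1
          simp only [List.length_append] at h2 ⊢
          omega
        obtain ⟨x, rfl⟩ := List.length_eq_one_iff.mp ht1
        exact noExt x hM1.1
    have hmM : m = psiW z (c :: m'') := isMinFin_unique hm hMF
    constructor
    · intro _
      exact hmM
    · intro hne
      exfalso
      apply hne
      rw [hmM, psiW_cons]
      rfl
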